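/- Let (A, μ, ∂) be a unital GDQ ring, X ∈ A with ∂X = 1⊗1, and N = Ker ∂. Let β₁, β₂, β₃ be p×p matrices over N such that β₂ − β₁(X⊗I_p)β₃ is invertible in M_p(A). Then α = β₃(β₂ − β₁(X⊗I_p)β₃)⁻¹β₁ is a corepresentation, i.e. (∂ ⊗ id_{M_p})(α) = α ⊗_{M_p} α, meaning ∂a_{ik} = Σ_j a_{ij} ⊗ a_{jk} for all i,k. -/

import Mathlib

/- STATEMENT 3: More corepresentations (Proposition 3.1).
In a unital GDQ ring (A, μ, ∂) with ∂X = 1⊗1 and N = Ker ∂, if β₁, β₂, β₃ are p×p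
matrices over N with β₂ − β₁(X⊗I_p)β₃ invertible, then
α = β₃(β₂ − β₁(X⊗I_p)β₃)⁻¹β₁ is a corepresentation: ∂a_{ik} = Σ_j a_{ij} ⊗ a_{jk}. -/

open TensorProduct

noncomputable section

theorem stmt3 {A : Type*} [Ring A] [Algebra ℂ A] {p : ℕ}
    (D : A →ₗ[ℂ] A ⊗[ℂ] A)
    -- ∂ is a derivation
    (hder : ∀ a b : A, D (a * b) =
      (a ⊗ₜ[ℂ] (1 : A)) * D b + D a * ((1 : A) ⊗ₜ[ℂ] b))
    -- ∂ is coassociative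
    (hco : ∀ a : A, TensorProduct.assoc ℂ A A A (LinearMap.rTensor A D (D a)) =
      LinearMap.lTensor A D (D a))
    (X : A) (hX : D X = (1 : A) ⊗ₜ[ℂ] (1 : A))
    (β₁ β₂ β₃ : Matrix (Fin p) (Fin p) A)
    (hβ₁ : ∀ i j, β₁ i j ∈ LinearMap.ker D)
    (hβ₂ : ∀ i j, β₂ i j ∈ LinearMap.ker D)
    (hβ₃ : ∀ i j, β₃ i j ∈ LinearMap.ker D)
    [inst : Invertible (β₂ - β₁ * (X • (1 : Matrix (Fin p) (Fin p) A)) * β₃)] :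
    ∀ i k : Fin p,
      D ((β₃ * ⅟(β₂ - β₁ * (X • (1 : Matrix (Fin p) (Fin p) A)) * β₃) * β₁) i k) =
        ∑ j : Fin p,
          (β₃ * ⅟(β₂ - β₁ * (X • (1 : Matrix (Fin p) (Fin p) A)) * β₃) * β₁) i j ⊗ₜ[ℂ]
          (β₃ * ⅟(β₂ - β₁ * (X • (1 : Matrix (Fin p) (Fin p) A)) * β₃) * β₁) j k := by
  classical
  set γ : Matrix (Fin p) (Fin p) A :=
    ⅟(β₂ - β₁ * (X • (1 : Matrix (Fin p) (Fin p) A)) * β₃) with hγdef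
  have hγQ : γ * (β₂ - β₁ * (X • (1 : Matrix (Fin p) (Fin p) A)) * β₃) = 1 :=
    invOf_mul_self _
  have hQγ : (β₂ - β₁ * (X • (1 : Matrix (Fin p) (Fin p) A)) * β₃) * γ = 1 :=
    mul_invOf_self _
  set Q : Matrix (Fin p) (Fin p) A :=
    β₂ - β₁ * (X • (1 : Matrix (Fin p) (Fin p) A)) * β₃ with hQ
  set L : Matrix (Fin p) (Fin p) A →+* Matrix (Fin p) (Fin p) (A ⊗[ℂ] A) :=
    (Algebra.TensorProduct.includeLeftRingHom (R := ℂ) (A := A) (B := A)).mapMatrix with hL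
  set R : Matrix (Fin p) (Fin p) A →+* Matrix (Fin p) (Fin p) (A ⊗[ℂ] A) :=
    (Algebra.TensorProduct.includeRight (R := ℂ) (A := A) (B := A)).toRingHom.mapMatrix with hR
  set DM : Matrix (Fin p) (Fin p) A → Matrix (Fin p) (Fin p) (A ⊗[ℂ] A) :=
    fun M => M.map D with hDM
  have hLap : ∀ M i j, L M i j = (M i j) ⊗ₜ[ℂ] (1 : A) := fun M i j => rfl
  have hRap : ∀ M i j, R M i j = (1 : A) ⊗ₜ[ℂ] (M i j) := fun M i j => rfl
  have hDMap : ∀ M i j, DM M i j = D (M i j) := fun M i j => rfl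
  have hD1 : D 1 = 0 := by
    have h := hder 1 1
    rw [mul_one, ← Algebra.TensorProduct.one_def, one_mul, mul_one] at h
    exact (right_eq_add.mp h)
  have leib : ∀ M N, DM (M * N) = L M * DM N + DM M * R N := by
    intro M N
    ext i k
    simp only [hDMap, Matrix.add_apply, Matrix.mul_apply, map_sum, hder, hLap, hRap,
      Finset.sum_add_distrib]
  have hb1 : DM β₁ = 0 := by
    ext i j; simpa [hDMap] using hβ₁ i j
  have hb2 : DM β₂ = 0 := by
    ext i j; simpa [hDMap] using hβ₂ i j
  have hb3 : DM β₃ = 0 := by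
    ext i j; simpa [hDMap] using hβ₃ i j
  have hDXm : DM (X • (1 : Matrix (Fin p) (Fin p) A)) = 1 := by
    ext i j
    by_cases h : i = j <;>
      simp [hDM, Matrix.map_apply, Matrix.smul_apply, Matrix.one_apply, h, hX, hD1,
        Algebra.TensorProduct.one_def]
  have hDsub : ∀ M N, DM (M - N) = DM M - DM N := by
    intro M N; ext i j; simp [hDMap, Matrix.sub_apply]
  have hDQ : DM Q = -(L β₁ * R β₃) := by
    rw [hQ, hDsub, hb2, leib, leib, hb3, hDXm, hb1]
    simp
  have hDγ : DM γ = L (γ * β₁) * R (β₃ * γ) := by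
    have h0 : (0 : Matrix (Fin p) (Fin p) (A ⊗[ℂ] A)) = L γ * DM Q + DM γ * R Q := by
      have h1 : DM (1 : Matrix (Fin p) (Fin p) A) = 0 := by
        ext i j
        by_cases h : i = j <;> simp [hDMap, Matrix.one_apply, h, hD1]
      rw [← leib, hγQ, h1]
    have h2 : DM γ * R Q = L γ * (L β₁ * R β₃) := by
      rw [hDQ, mul_neg] at h0
      have h0' := h0.symm
      rw [neg_add_eq_zero] at h0'
      exact h0'.symm
    calc DM γ = DM γ * (R Q * R γ) := by rw [← map_mul, hQγ, map_one, mul_one]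
      _ = (DM γ * R Q) * R γ := (mul_assoc _ _ _).symm
      _ = L γ * (L β₁ * R β₃) * R γ := by rw [h2]
      _ = L (γ * β₁) * R (β₃ * γ) := by rw [map_mul, map_mul]; simp only [mul_assoc]
  have hfinal : DM (β₃ * γ * β₁) = L (β₃ * γ * β₁) * R (β₃ * γ * β₁) := by
    rw [leib, leib, hb1, hb3, hDγ]
    simp only [map_mul, mul_zero, zero_mul, add_zero, zero_add, mul_assoc]
  intro i k
  have h := congrFun (congrFun hfinal i) k
  have hl : DM (β₃ * γ * β₁) i k = D ((β₃ * γ * β₁) i k) := rfl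
  have hr : (L (β₃ * γ * β₁) * R (β₃ * γ * β₁)) i k =
      ∑ j : Fin p, (β₃ * γ * β₁) i j ⊗ₜ[ℂ] (β₃ * γ * β₁) j k := by
    rw [Matrix.mul_apply]
    refine Finset.sum_congr rfl fun j _ => ?_
    rw [hLap, hRap, Algebra.TensorProduct.tmul_mul_tmul, mul_one, one_mul]
  show D ((β₃ * γ * β₁) i k) =
    ∑ j : Fin p, (β₃ * γ * β₁) i j ⊗ₜ[ℂ] (β₃ * γ * β₁) j k
  rw [← hl, ← hr]
  exact h
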